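/- arXiv:2007.02505 — 2 statements merged into one kernel-verified Lean document; each statement's English description precedes it below -/
import Mathlib

section
/- Let f, h ∈ R be homogeneous polynomials with f ≠ 0 of degree d ≥ 1, let s ≥ 1 be an integer, and let F be a homogeneous polynomial of degree ν < s·d with F ∈ (f, h)^s. Then h divides F. (This is the step in the proof of Theorem 2.5 where membership of a low-degree form in the s-th power of the complete intersection ideal (f, h) = (f^s, f^{s−1}h, …, h^s) forces divisibility by h.) -/
open MvPolynomial

lemma aux_dvd_component {k : Type*} [Field k] {σ : Type*} (h g : MvPolynomial σ k)
    (e n : ℕ) (hh : h.IsHomogeneous e) :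
    h ∣ homogeneousComponent n (h * g) := by
  conv_rhs => rw [← sum_homogeneousComponent g]
  rw [Finset.mul_sum, map_sum]
  apply Finset.dvd_sum
  intro j _
  rw [homogeneousComponent_of_mem
    ((mem_homogeneousSubmodule _ _).mpr (hh.mul (homogeneousComponent_isHomogeneous j g)))]
  split_ifs
  · exact Dvd.intro _ rfl
  · exact dvd_zero _

lemma aux_zero_component {k : Type*} [Field k] {σ : Type*} (p q : MvPolynomial σ k)
    (t n : ℕ) (hp : p.IsHomogeneous t) (hn : n < t) :
    homogeneousComponent n (p * q) = 0 := by
  conv_lhs => rw [← sum_homogeneousComponent q]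
  rw [Finset.mul_sum, map_sum]
  apply Finset.sum_eq_zero
  intro j _
  rw [homogeneousComponent_of_mem
    ((mem_homogeneousSubmodule _ _).mpr (hp.mul (homogeneousComponent_isHomogeneous j q)))]
  have : n ≠ t + j := by omega
  simp [this]

lemma aux_pow_le {R : Type*} [CommRing R] (I J : Ideal R) (n : ℕ) :
    (I ⊔ J) ^ (n + 1) ≤ I ^ (n + 1) ⊔ J := by
  induction n with
  | zero => simp
  | succ n ih =>
    calc (I ⊔ J) ^ (n + 2) = (I ⊔ J) ^ (n + 1) * (I ⊔ J) := by ring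
    _ ≤ (I ^ (n + 1) ⊔ J) * (I ⊔ J) := Ideal.mul_mono_left ih
    _ ≤ I ^ (n + 2) ⊔ J := by
        rw [Ideal.sup_mul, Ideal.mul_sup, Ideal.mul_sup]
        apply sup_le (sup_le _ _) (sup_le _ _)
        · rw [← pow_succ]; exact le_sup_left
        · exact le_trans Ideal.mul_le_right le_sup_right
        · exact le_trans Ideal.mul_le_left le_sup_right
        · exact le_trans Ideal.mul_le_left le_sup_right

/-- If a homogeneous polynomial `F` of degree `ν < s·d` lies in `(f, h)^s`, where `f` is
homogeneous of degree `d ≥ 1` and `h` is homogeneous, then `h` divides `F`. -/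
theorem dvd_of_mem_pow_span_pair
    {k : Type*} [Field k] (m : ℕ) (hm : 1 ≤ m)
    (f h F : MvPolynomial (Fin (m + 1)) k) (d e s ν : ℕ)
    (hd : 1 ≤ d) (hf0 : f ≠ 0) (hfhom : f.IsHomogeneous d) (hhhom : h.IsHomogeneous e)
    (hs : 1 ≤ s) (hFhom : F.IsHomogeneous ν) (hν : ν < s * d)
    (hmem : F ∈ (Ideal.span {f, h}) ^ s) :
    h ∣ F := by
  obtain ⟨t, rfl⟩ : ∃ t, s = t + 1 := ⟨s - 1, (Nat.succ_pred_eq_of_pos hs).symm⟩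
  have h1 : Ideal.span ({f, h} : Set (MvPolynomial (Fin (m + 1)) k)) =
      Ideal.span {f} ⊔ Ideal.span {h} := by
    rw [show ({f, h} : Set (MvPolynomial (Fin (m + 1)) k)) = insert f {h} from rfl,
      Ideal.span_insert]
  rw [h1] at hmem
  have hmem2 : F ∈ Ideal.span {f} ^ (t + 1) ⊔ Ideal.span {h} :=
    aux_pow_le _ _ t hmem
  rw [Ideal.span_singleton_pow] at hmem2
  obtain ⟨y, hy, z, hz, hyz⟩ := Submodule.mem_sup.mp hmem2
  rw [Ideal.mem_span_singleton] at hy hz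
  obtain ⟨a, rfl⟩ := hy
  obtain ⟨g, rfl⟩ := hz
  have hFc : homogeneousComponent ν F = F := by
    rw [homogeneousComponent_of_mem ((mem_homogeneousSubmodule _ _).mpr hFhom)]
    simp
  have hpow : (f ^ (t + 1)).IsHomogeneous ((t + 1) * d) := by
    have := hfhom.pow (t + 1)
    rwa [mul_comm] at this
  have := aux_zero_component (f ^ (t + 1)) a ((t + 1) * d) ν hpow hν
  have hdvd := aux_dvd_component h g e ν hhhom
  rw [← hFc, ← hyz, map_add, this, zero_add]
  exact hdvd
end

section
/- Let p, q ∈ k^{n+1} be nonzero vectors with p_i = 1 and q_l = 1 for some indices i, l, and assume p and q are not proportional (so they represent two distinct points of projective n-space over k). If g ∈ R divides f_j − p_j · f_i for every j and also divides f_j − q_j · f_l for every j, then g divides every f_j; in particular, since gcd(f_0,…,f_n) = 1, g is a nonzero constant. Consequently, greatest common divisors h_p of {f_j − p_j f_i}_j and h_q of {f_j − q_j f_l}_j satisfy gcd(h_p, h_q) = 1. (This is the pairwise-coprimality claim gcd(h_y, h_{y'}) = 1 for distinct points y ≠ y' used in the proof of Theorem 2.5.) -/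
open MvPolynomial

/-- Pairwise coprimality of the gcd's attached to two distinct points: if `g` divides all
`f_j − p_j f_i` and all `f_j − q_j f_l` for non-proportional `p, q`, then `g` divides every
`f_j`, hence is a unit; consequently `gcd(h_p, h_q) = 1`. -/
theorem gcds_of_distinct_points_coprime
    {k : Type*} [Field k] (m n d : ℕ) (hm : 1 ≤ m) (hd : 1 ≤ d)
    (f : Fin (n + 1) → MvPolynomial (Fin (m + 1)) k)
    (hfhom : ∀ j, (f j).IsHomogeneous d)
    (hfgcd : ∀ g : MvPolynomial (Fin (m + 1)) k, (∀ j, g ∣ f j) → IsUnit g)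
    (p q : Fin (n + 1) → k) (hp0 : p ≠ 0) (hq0 : q ≠ 0)
    (i l : Fin (n + 1)) (hpi : p i = 1) (hql : q l = 1)
    (hprop : ∀ c : k, c • p ≠ q) :
    (∀ g : MvPolynomial (Fin (m + 1)) k,
        (∀ j, g ∣ (f j - C (p j) * f i)) → (∀ j, g ∣ (f j - C (q j) * f l)) →
          (∀ j, g ∣ f j) ∧ IsUnit g)
    ∧ (∀ hp hq : MvPolynomial (Fin (m + 1)) k,
        (∀ j, hp ∣ (f j - C (p j) * f i)) →
        (∀ g : MvPolynomial (Fin (m + 1)) k, (∀ j, g ∣ (f j - C (p j) * f i)) → g ∣ hp) →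
        (∀ j, hq ∣ (f j - C (q j) * f l)) →
        (∀ g : MvPolynomial (Fin (m + 1)) k, (∀ j, g ∣ (f j - C (q j) * f l)) → g ∣ hq) →
        ∀ g : MvPolynomial (Fin (m + 1)) k, g ∣ hp → g ∣ hq → IsUnit g) := by
  have main : ∀ g : MvPolynomial (Fin (m + 1)) k,
      (∀ j, g ∣ (f j - C (p j) * f i)) → (∀ j, g ∣ (f j - C (q j) * f l)) →
        (∀ j, g ∣ f j) := by
    intro g h1 h2
    have h3 : ∀ j, g ∣ C (q j) * f l - C (p j) * f i := by
      intro j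
      have hd := dvd_sub (h1 j) (h2 j)
      have heq : (f j - C (p j) * f i) - (f j - C (q j) * f l)
          = C (q j) * f l - C (p j) * f i := by ring
      rwa [heq] at hd
    have hA : g ∣ C (q i) * f l - f i := by
      have := h3 i
      rwa [hpi, map_one, one_mul] at this
    have hB : g ∣ f l - C (p l) * f i := by
      have := h3 l
      rwa [hql, map_one, one_mul] at this
    by_cases hcase : q i * p l = 1
    · by_cases hall : ∀ j, q i * p j = q j
      · exact absurd (_root_.funext fun j : Fin (n+1) => by
          simp only [Pi.smul_apply, smul_eq_mul, hall j]) (hprop (q i))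
      · push_neg at hall
        obtain ⟨j, hj⟩ := hall
        -- g ∣ C (q i * p j - q j) * f l
        have hL' : g ∣ C (q i * p j - q j) * f l := by
          have hd := dvd_sub (Dvd.dvd.mul_left hA (C (p j))) (h3 j)
          have heq : C (p j) * (C (q i) * f l - f i) - (C (q j) * f l - C (p j) * f i)
              = C (q i * p j - q j) * f l := by
            simp only [map_sub, map_mul]; ring
          rwa [heq] at hd
        have hc : (q i * p j - q j) ≠ 0 := sub_ne_zero_of_ne hj
        have hL : g ∣ f l := by
          have := Dvd.dvd.mul_left hL' (C (q i * p j - q j)⁻¹)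
          rwa [← mul_assoc, ← map_mul, inv_mul_cancel₀ hc, map_one, one_mul] at this
        intro j'
        have : f j' = (f j' - C (q j') * f l) + C (q j') * f l := by ring
        rw [this]
        exact dvd_add (h2 j') (Dvd.dvd.mul_left hL _)
    · have hI' : g ∣ C (1 - q i * p l) * f i := by
        have hd := dvd_sub (Dvd.dvd.mul_left hB (C (q i))) hA
        have heq : C (q i) * (f l - C (p l) * f i) - (C (q i) * f l - f i)
            = C (1 - q i * p l) * f i := by
          simp only [map_sub, map_mul, map_one]; ring
        rwa [heq] at hd
      have hc : (1 - q i * p l) ≠ 0 := sub_ne_zero_of_ne (Ne.symm hcase)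
      have hI : g ∣ f i := by
        have := Dvd.dvd.mul_left hI' (C (1 - q i * p l)⁻¹)
        rwa [← mul_assoc, ← map_mul, inv_mul_cancel₀ hc, map_one, one_mul] at this
      intro j'
      have : f j' = (f j' - C (p j') * f i) + C (p j') * f i := by ring
      rw [this]
      exact dvd_add (h1 j') (Dvd.dvd.mul_left hI _)
  constructor
  · intro g h1 h2
    exact ⟨main g h1 h2, hfgcd g (main g h1 h2)⟩
  · intro hp hq hp1 _ hq1 _ g hgp hgq
    exact hfgcd g (main g (fun j => hgp.trans (hp1 j)) (fun j => hgq.trans (hq1 j)))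
end
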